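/- arXiv:math/0503222 — 3 statements merged into one kernel-verified Lean document; each statement's English description precedes it below -/
import Mathlib

section
/- Let p + q = 1, 0 < q < 1, ρ ∈ (1, 1/p], and suppose (ε_k) satisfies Σ ε_k = 0, |ε_k| ≤ δ ρ^{-k}, with 2δ(1+ρ)/(ρ-1)^2 ≤ 1/6. Set F(ξ) = qξ/(1-pξ) + Σ_k ε_k ξ^k. Then for all complex ξ with |ξ| ≤ (1+ρ)/2, |(F(ξ) - 1)/(ξ - 1)| ≥ 1/3. -/
theorem denominator_lower_bound
    (p q δ ρ : ℝ) (hpq : p + q = 1) (hq0 : 0 < q) (hq1 : q < 1)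
    (hρ1 : 1 < ρ) (hρp : ρ ≤ 1 / p) (hδ : 0 ≤ δ)
    (hsmall : 2 * δ * (1 + ρ) / (ρ - 1) ^ 2 ≤ 1 / 6)
    (ε : ℕ → ℝ) (hε : ∀ k : ℕ, |ε (k + 1)| ≤ δ / ρ ^ (k + 1))
    (hsum : ∑' k : ℕ, ε (k + 1) = 0)
    (F : ℂ → ℂ)
    (hF : ∀ ξ : ℂ, F ξ = (q : ℂ) * ξ / (1 - (p : ℂ) * ξ)
            + ∑' k : ℕ, (ε (k + 1) : ℂ) * ξ ^ (k + 1)) :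
    ∀ ξ : ℂ, ‖ξ‖ ≤ (1 + ρ) / 2 → ξ ≠ 1 →
      (1 : ℝ) / 3 ≤ ‖(F ξ - 1) / (ξ - 1)‖ := by
  intro ξ hξ hξ1
  have hp0 : 0 < p := by linarith
  have hρ0 : 0 < ρ := by linarith
  have hpρ : ρ * p ≤ 1 := by
    have := (le_div_iff₀ hp0).mp hρp; linarith
  set r : ℝ := (1 + ρ) / 2 with hr
  have hr1 : 1 < r := by rw [hr]; linarith
  have hrρ : r < ρ := by rw [hr]; linarith
  set x : ℝ := r / ρ with hx
  have hx0 : 0 < x := div_pos (by linarith) hρ0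
  have hx1 : x < 1 := (div_lt_one hρ0).mpr hrρ
  have hξ0 : ξ - 1 ≠ 0 := sub_ne_zero.mpr hξ1
  have hxpow : ∀ k : ℕ, x ^ k = r ^ k / ρ ^ k := fun k => div_pow r ρ k
  -- the partial geometric sums
  set S : ℕ → ℂ := fun k => ∑ j ∈ Finset.range (k + 1), ξ ^ j with hS
  have hSbound : ∀ k, ‖S k‖ ≤ r ^ (k + 1) / (r - 1) := by
    intro k
    calc ‖S k‖ ≤ ∑ j ∈ Finset.range (k + 1), ‖ξ ^ j‖ := norm_sum_le _ _
      _ ≤ ∑ j ∈ Finset.range (k + 1), r ^ j := by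
          apply Finset.sum_le_sum
          intro j _
          rw [norm_pow]
          exact pow_le_pow_left₀ (norm_nonneg ξ) hξ j
      _ = (r ^ (k + 1) - 1) / (r - 1) := geom_sum_eq (by linarith) _
      _ ≤ r ^ (k + 1) / (r - 1) := by
          exact (div_le_div_iff_of_pos_right (by linarith)).mpr (by linarith)
  -- term bound for T
  have hTterm : ∀ k, ‖(ε (k + 1) : ℂ) * S k‖ ≤ (δ / (r - 1) * x) * x ^ k := by
    intro k
    rw [norm_mul, Complex.norm_real]
    have h1 : ‖S k‖ ≤ r ^ (k + 1) / (r - 1) := hSbound k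
    have h2 : |ε (k + 1)| ≤ δ / ρ ^ (k + 1) := hε k
    have hρpow : (0:ℝ) < ρ ^ (k + 1) := pow_pos hρ0 _
    have hrpow : (0:ℝ) < r ^ (k + 1) := pow_pos (by linarith) _
    calc |ε (k + 1)| * ‖S k‖ ≤ (δ / ρ ^ (k + 1)) * (r ^ (k + 1) / (r - 1)) := by
          apply mul_le_mul h2 h1 (norm_nonneg _)
          positivity
      _ = (δ / (r - 1) * x) * x ^ k := by
          rw [hxpow k, hx]
          field_simp
          ring
  -- summabilities
  have hgeo : HasSum (fun k : ℕ => (δ / (r - 1) * x) * x ^ k)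
      ((δ / (r - 1) * x) * (1 - x)⁻¹) :=
    (hasSum_geometric_of_lt_one hx0.le hx1).mul_left _
  have hsumT : Summable fun k => (ε (k + 1) : ℂ) * S k :=
    Summable.of_norm_bounded hgeo.summable hTterm
  have hEterm : ∀ k, ‖(ε (k + 1) : ℂ) * ξ ^ (k + 1)‖ ≤ (δ * x) * x ^ k := by
    intro k
    rw [norm_mul, Complex.norm_real, norm_pow]
    calc |ε (k + 1)| * ‖ξ‖ ^ (k + 1) ≤ (δ / ρ ^ (k + 1)) * r ^ (k + 1) := by
          apply mul_le_mul (hε k) (pow_le_pow_left₀ (norm_nonneg ξ) hξ _)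
            (by positivity) (by positivity)
      _ = (δ * x) * x ^ k := by
          rw [hxpow k, hx]
          field_simp
          ring
  have hsumE : Summable fun k => (ε (k + 1) : ℂ) * ξ ^ (k + 1) :=
    Summable.of_norm_bounded (((hasSum_geometric_of_lt_one hx0.le hx1).mul_left
      (δ * x)).summable) hEterm
  have hbnd : ∀ k, |ε (k + 1)| ≤ (δ * x) * x ^ k := by
    intro k
    have heq : (δ * x) * x ^ k = δ * r ^ (k + 1) / ρ ^ (k + 1) := by
      rw [hxpow k, hx]
      field_simp
      ring
    calc |ε (k + 1)| ≤ δ / ρ ^ (k + 1) := hε k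
      _ = δ * 1 / ρ ^ (k + 1) := by ring
      _ ≤ δ * r ^ (k + 1) / ρ ^ (k + 1) := by
          gcongr
          exact one_le_pow₀ hr1.le
      _ = (δ * x) * x ^ k := heq.symm
  have hsumεC : Summable fun k => ((ε (k + 1) : ℝ) : ℂ) := by
    apply Summable.of_norm_bounded (((hasSum_geometric_of_lt_one hx0.le hx1).mul_left
      (δ * x)).summable)
    intro k
    rw [Complex.norm_real]
    exact hbnd k
  have hεC0 : ∑' k, ((ε (k + 1) : ℝ) : ℂ) = 0 := by
    rw [← Complex.ofReal_tsum, hsum, Complex.ofReal_zero]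
  -- set T
  set T : ℂ := ∑' k, (ε (k + 1) : ℂ) * S k with hT
  -- E = (ξ - 1) * T
  have hE : ∑' k, (ε (k + 1) : ℂ) * ξ ^ (k + 1) = (ξ - 1) * T := by
    have hterm : ∀ k, (ε (k + 1) : ℂ) * ξ ^ (k + 1)
        = (ξ - 1) * ((ε (k + 1) : ℂ) * S k) + (ε (k + 1) : ℂ) := by
      intro k
      have hg := geom_sum_mul ξ (k + 1)
      rw [hS]
      linear_combination (-(ε (k + 1) : ℂ)) * hg
    calc ∑' k, (ε (k + 1) : ℂ) * ξ ^ (k + 1)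
        = ∑' k, ((ξ - 1) * ((ε (k + 1) : ℂ) * S k) + (ε (k + 1) : ℂ)) := by
          exact tsum_congr hterm
      _ = (∑' k, (ξ - 1) * ((ε (k + 1) : ℂ) * S k)) + ∑' k, ((ε (k + 1) : ℝ) : ℂ) :=
          Summable.tsum_add (hsumT.mul_left _) hsumεC
      _ = (ξ - 1) * T := by rw [hεC0, add_zero, tsum_mul_left]
  -- 1 - p ξ ≠ 0
  have hprle : p * r ≤ 1 := by rw [hr]; nlinarith
  have hpξ : ‖(p : ℂ) * ξ‖ ≤ p * r := by
    rw [norm_mul, Complex.norm_real, Real.norm_eq_abs, abs_of_pos hp0]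
    exact mul_le_mul_of_nonneg_left hξ hp0.le
  have hpξlt : ‖(p : ℂ) * ξ‖ < 1 := by
    calc ‖(p : ℂ) * ξ‖ ≤ p * r := hpξ
      _ < 1 := by rw [hr]; nlinarith
  have hden_lb : (0:ℝ) < ‖1 - (p : ℂ) * ξ‖ := by
    have h := norm_sub_norm_le (1 : ℂ) ((p : ℂ) * ξ)
    rw [norm_one] at h
    linarith [norm_nonneg (1 - (p:ℂ) * ξ), (by linarith : (0:ℝ) < 1 - ‖(p:ℂ)*ξ‖), h]
  have hden0 : (1 : ℂ) - (p : ℂ) * ξ ≠ 0 := by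
    intro h; rw [h, norm_zero] at hden_lb; exact lt_irrefl 0 hden_lb
  have hden_ub : ‖1 - (p : ℂ) * ξ‖ ≤ 2 := by
    calc ‖1 - (p : ℂ) * ξ‖ ≤ ‖(1:ℂ)‖ + ‖(p : ℂ) * ξ‖ := norm_sub_le _ _
      _ ≤ 1 + p * r := by rw [norm_one]; linarith
      _ ≤ 2 := by linarith
  -- the key identity
  have hq' : (q : ℂ) = 1 - (p : ℂ) := by
    have : q = 1 - p := by linarith
    rw [this]; push_cast; ring
  have key : (F ξ - 1) / (ξ - 1) = (1 - (p : ℂ) * ξ)⁻¹ + T := by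
    rw [hF, hE, hq']
    field_simp
    ring
  rw [key]
  -- norm bound on T
  have hTnorm : ‖T‖ ≤ 1 / 6 := by
    have h1 : ‖T‖ ≤ (δ / (r - 1) * x) * (1 - x)⁻¹ :=
      tsum_of_norm_bounded hgeo hTterm
    have h2 : (δ / (r - 1) * x) * (1 - x)⁻¹ = 2 * δ * (1 + ρ) / (ρ - 1) ^ 2 := by
      have hρ1' : ρ - 1 ≠ 0 := by linarith
      have hρ0' : ρ ≠ 0 := hρ0.ne'
      have h1x : (1:ℝ) - x = (ρ - 1) / (2 * ρ) := by
        rw [hx, hr]; field_simp; ring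
      have hrm1 : r - 1 = (ρ - 1) / 2 := by rw [hr]; ring
      have hx2 : x = (1 + ρ) / (2 * ρ) := by rw [hx, hr]; field_simp
      rw [h1x, hrm1, hx2]
      field_simp
    linarith [h1, h2 ▸ h1]
  -- norm lower bound on geometric part
  have hinv : (1:ℝ) / 2 ≤ ‖(1 - (p : ℂ) * ξ)⁻¹‖ := by
    rw [norm_inv, one_div]
    exact inv_anti₀ hden_lb hden_ub
  have hfin := norm_add_le ((1 - (p : ℂ) * ξ)⁻¹ + T) (-T)
  rw [norm_neg] at hfin
  simp only [add_neg_cancel_right] at hfin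
  linarith
end

section
/- Let E(ξ) = Σ_{k≥1} ε_k ξ^k with Σ ε_k = 0, |ε_k| ≤ δ ρ^{-k}, ρ > 1. Then with η = (ρ-1)/2 and R = (1+ρ)/2, for all |ξ| ≤ R one has |(E(ξ) - (ξ-1)E'(1))/(ξ-1)^2| ≤ 2δρ/(ρ-1)^3. -/
open Finset

/-- The second divided-difference polynomial `(z^k - 1 - k(z-1))/(z-1)^2`. -/
def Qpoly {α : Type*} [CommRing α] (z : α) (k : ℕ) : α :=
  ∑ j ∈ range k, ∑ i ∈ range j, z ^ i

lemma key_ident {α : Type*} [CommRing α] (z : α) (k : ℕ) :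
    z ^ k - 1 - (k : α) * (z - 1) = (z - 1) ^ 2 * Qpoly z k := by
  have h2 : ∑ j ∈ range k, (z ^ j - 1) = Qpoly z k * (z - 1) := by
    rw [Qpoly, Finset.sum_mul]
    exact Finset.sum_congr rfl fun j _ => (geom_sum_mul z j).symm
  have h3 : ∑ j ∈ range k, (z ^ j - 1) = (∑ j ∈ range k, z ^ j) - k := by
    rw [Finset.sum_sub_distrib]; simp
  calc z ^ k - 1 - (k : α) * (z - 1)
      = ((∑ j ∈ range k, z ^ j) - (k : α)) * (z - 1) := by
        rw [sub_mul, geom_sum_mul]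
    _ = (Qpoly z k * (z - 1)) * (z - 1) := by rw [← h3, h2]
    _ = (z - 1) ^ 2 * Qpoly z k := by ring

lemma Qpoly_norm_le (ξ : ℂ) (R : ℝ) (_hR : 0 ≤ R) (hξ : ‖ξ‖ ≤ R) (k : ℕ) :
    ‖Qpoly ξ k‖ ≤ Qpoly R k := by
  calc ‖Qpoly ξ k‖ ≤ ∑ j ∈ range k, ‖∑ i ∈ range j, ξ ^ i‖ := norm_sum_le _ _
    _ ≤ ∑ j ∈ range k, ∑ i ∈ range j, ‖ξ ^ i‖ :=
        Finset.sum_le_sum fun j _ => norm_sum_le _ _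
    _ ≤ Qpoly R k := by
        apply Finset.sum_le_sum; intro j _
        apply Finset.sum_le_sum; intro i _
        rw [norm_pow]
        exact pow_le_pow_left₀ (norm_nonneg _) hξ i

lemma Qpoly_nonneg (R : ℝ) (_hR : 0 ≤ R) (k : ℕ) : 0 ≤ Qpoly R k := by
  apply Finset.sum_nonneg; intro j _
  apply Finset.sum_nonneg; intro i _
  positivity

theorem numerator_upper_bound
    (δ ρ : ℝ) (hδ : 0 ≤ δ) (hρ : 1 < ρ)
    (ε : ℕ → ℝ) (hε : ∀ k : ℕ, |ε (k + 1)| ≤ δ / ρ ^ (k + 1))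
    (hsum : ∑' k : ℕ, ε (k + 1) = 0)
    (E : ℂ → ℂ)
    (hE : ∀ ξ : ℂ, E ξ = ∑' k : ℕ, (ε (k + 1) : ℂ) * ξ ^ (k + 1))
    (E'one : ℂ) (hE' : E'one = ∑' k : ℕ, ((k + 1 : ℕ) : ℂ) * (ε (k + 1) : ℂ)) :
    ∀ ξ : ℂ, ‖ξ‖ ≤ (1 + ρ) / 2 → ξ ≠ 1 →
      ‖(E ξ - (ξ - 1) * E'one) / (ξ - 1) ^ 2‖ ≤ 2 * δ * ρ / (ρ - 1) ^ 3 := by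
  intro ξ hξ hξ1
  obtain ⟨R, hRdef⟩ : ∃ R : ℝ, R = (1 + ρ) / 2 := ⟨_, rfl⟩
  rw [← hRdef] at hξ
  have hρ0 : (0:ℝ) < ρ := lt_trans one_pos hρ
  have hR1 : (1:ℝ) < R := by rw [hRdef]; linarith
  have hR0 : (0:ℝ) < R := lt_trans one_pos hR1
  have hRρ : R < ρ := by rw [hRdef]; linarith
  obtain ⟨x, hxdef⟩ : ∃ x : ℝ, x = R / ρ := ⟨_, rfl⟩
  obtain ⟨y, hydef⟩ : ∃ y : ℝ, y = 1 / ρ := ⟨_, rfl⟩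
  have hx0 : 0 ≤ x := by rw [hxdef]; positivity
  have hx1 : x < 1 := by rw [hxdef]; exact (div_lt_one hρ0).mpr hRρ
  have hy0 : 0 ≤ y := by rw [hydef]; positivity
  have hy1 : y < 1 := by rw [hydef]; exact (div_lt_one hρ0).mpr hρ
  have hxy : x = R * y := by rw [hxdef, hydef]; ring
  have hR1ne : R - 1 ≠ 0 := by linarith
  have hεb : ∀ k : ℕ, |ε (k + 1)| ≤ δ * y ^ (k + 1) := by
    intro k
    calc |ε (k + 1)| ≤ δ / ρ ^ (k + 1) := hε k
      _ = δ * y ^ (k + 1) := by rw [hydef, div_pow, one_pow]; ring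
  -- the bounding sequence
  set b : ℕ → ℝ := fun k => δ * y ^ (k + 1) * Qpoly R (k + 1) with hb
  -- (R-1)^2 * b k in closed geometric form
  have hc : ∀ k : ℕ, (R - 1) ^ 2 * b k
      = δ * x * x ^ k - δ * y * y ^ k - δ * (R - 1) * y * ((k : ℝ) * y ^ k)
        - δ * (R - 1) * y * y ^ k := by
    intro k
    have e := key_ident R (k + 1)
    push_cast at e
    rw [hb]
    rw [hxy]
    calc (R - 1) ^ 2 * (δ * y ^ (k + 1) * Qpoly R (k + 1))
        = δ * y ^ (k + 1) * ((R - 1) ^ 2 * Qpoly R (k + 1)) := by ring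
      _ = δ * y ^ (k + 1) * (R ^ (k + 1) - 1 - ((k : ℝ) + 1) * (R - 1)) := by rw [← e]
      _ = _ := by ring
  -- sum of the closed form
  have hy' : ‖y‖ < 1 := by rwa [Real.norm_eq_abs, abs_of_nonneg hy0]
  have hSgx : HasSum (fun k : ℕ => x ^ k) (1 - x)⁻¹ := hasSum_geometric_of_lt_one hx0 hx1
  have hSgy : HasSum (fun k : ℕ => y ^ k) (1 - y)⁻¹ := hasSum_geometric_of_lt_one hy0 hy1
  have hSky : HasSum (fun k : ℕ => (k : ℝ) * y ^ k) (y / (1 - y) ^ 2) :=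
    hasSum_coe_mul_geometric_of_norm_lt_one hy'
  have hScsum : HasSum (fun k : ℕ => (R - 1) ^ 2 * b k)
      (δ * x * (1 - x)⁻¹ - δ * y * (1 - y)⁻¹ - δ * (R - 1) * y * (y / (1 - y) ^ 2)
        - δ * (R - 1) * y * (1 - y)⁻¹) := by
    have h := (((hSgx.mul_left (δ * x)).sub (hSgy.mul_left (δ * y))).sub
        (hSky.mul_left (δ * (R - 1) * y))).sub (hSgy.mul_left (δ * (R - 1) * y))
    convert h using 1
    · rfl
    funext k
    exact hc k
  have hbsum : HasSum b (((R - 1) ^ 2)⁻¹ *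
      (δ * x * (1 - x)⁻¹ - δ * y * (1 - y)⁻¹ - δ * (R - 1) * y * (y / (1 - y) ^ 2)
        - δ * (R - 1) * y * (1 - y)⁻¹)) := by
    have h := hScsum.mul_left ((R - 1) ^ 2)⁻¹
    convert h using 1
    · rfl
    funext k
    field_simp
  -- identify the value of the sum
  have hval : ((R - 1) ^ 2)⁻¹ *
      (δ * x * (1 - x)⁻¹ - δ * y * (1 - y)⁻¹ - δ * (R - 1) * y * (y / (1 - y) ^ 2)
        - δ * (R - 1) * y * (1 - y)⁻¹) = 2 * δ * ρ / (ρ - 1) ^ 3 := by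
    have h1x : 1 - x = (ρ - 1) / (2 * ρ) := by
      rw [hxdef, hRdef]; field_simp; ring
    have h1y : 1 - y = (ρ - 1) / ρ := by
      rw [hydef]; field_simp
    have hR1' : R - 1 = (ρ - 1) / 2 := by rw [hRdef]; ring
    have hρ1 : ρ - 1 ≠ 0 := by linarith
    rw [h1x, h1y, hR1', hxdef, hydef, hRdef]
    field_simp
    ring
  rw [hval] at hbsum
  -- summabilities over ℂ
  have hSε : Summable (fun k : ℕ => ε (k + 1)) := by
    apply Summable.of_norm_bounded (g := fun k : ℕ => δ * y * y ^ k)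
      ((summable_geometric_of_lt_one hy0 hy1).mul_left (δ * y))
    intro k
    rw [Real.norm_eq_abs]
    calc |ε (k + 1)| ≤ δ * y ^ (k + 1) := hεb k
      _ = δ * y * y ^ k := by ring
  have hS3 : Summable (fun k : ℕ => (ε (k + 1) : ℂ)) := by
    exact (RCLike.summable_ofReal ℂ).mpr hSε
  have hsumC : ∑' k : ℕ, (ε (k + 1) : ℂ) = 0 := by
    exact_mod_cast hsum
  have hS1 : Summable (fun k : ℕ => (ε (k + 1) : ℂ) * ξ ^ (k + 1)) := by
    apply Summable.of_norm_bounded (g := fun k : ℕ => δ * x * x ^ k)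
      ((summable_geometric_of_lt_one hx0 hx1).mul_left (δ * x))
    intro k
    rw [norm_mul, Complex.norm_real, Real.norm_eq_abs, norm_pow]
    calc |ε (k + 1)| * ‖ξ‖ ^ (k + 1)
        ≤ (δ * y ^ (k + 1)) * R ^ (k + 1) := by
          apply mul_le_mul (hεb k) (pow_le_pow_left₀ (norm_nonneg _) hξ _)
            (by positivity) (by positivity)
      _ = δ * x * x ^ k := by rw [hxy]; ring
  have hS2 : Summable (fun k : ℕ => ((k + 1 : ℕ) : ℂ) * (ε (k + 1) : ℂ)) := by
    have hs : Summable (fun k : ℕ => δ * y * (((k : ℝ) + 1) * y ^ k)) := by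
      apply Summable.mul_left
      have := (hasSum_coe_mul_geometric_of_norm_lt_one hy').summable.add
        (summable_geometric_of_lt_one hy0 hy1)
      convert this using 1
      · rfl
      funext k; ring
    apply Summable.of_norm_bounded hs
    intro k
    rw [norm_mul, Complex.norm_natCast, Complex.norm_real, Real.norm_eq_abs]
    push_cast
    calc ((k : ℝ) + 1) * |ε (k + 1)| ≤ ((k : ℝ) + 1) * (δ * y ^ (k + 1)) := by
          apply mul_le_mul_of_nonneg_left (hεb k) (by positivity)
      _ = δ * y * (((k : ℝ) + 1) * y ^ k) := by ring
  have hSc : Summable (fun k : ℕ => (ξ - 1) * (((k + 1 : ℕ) : ℂ) * (ε (k + 1) : ℂ))) :=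
    hS2.mul_left _
  -- the numerator as a single series
  have hnum : E ξ - (ξ - 1) * E'one
      = ∑' k : ℕ, (ε (k + 1) : ℂ) * (ξ ^ (k + 1) - 1 - ((k + 1 : ℕ) : ℂ) * (ξ - 1)) := by
    have hfun : (fun k : ℕ => (ε (k + 1) : ℂ) * (ξ ^ (k + 1) - 1 - ((k + 1 : ℕ) : ℂ) * (ξ - 1)))
        = fun k : ℕ => ((ε (k + 1) : ℂ) * ξ ^ (k + 1) - (ε (k + 1) : ℂ))
          - (ξ - 1) * (((k + 1 : ℕ) : ℂ) * (ε (k + 1) : ℂ)) := by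
      funext k; push_cast; ring
    rw [hfun, Summable.tsum_sub (hS1.sub hS3) hSc, Summable.tsum_sub hS1 hS3, hsumC, tsum_mul_left,
      hE ξ, hE']
    ring
  -- divide by (ξ-1)^2
  have hne : ((ξ : ℂ) - 1) ^ 2 ≠ 0 := pow_ne_zero _ (sub_ne_zero.mpr hξ1)
  have hquot : (E ξ - (ξ - 1) * E'one) / (ξ - 1) ^ 2
      = ∑' k : ℕ, (ε (k + 1) : ℂ) * Qpoly ξ (k + 1) := by
    rw [hnum]
    have hterm : ∀ k : ℕ, (ε (k + 1) : ℂ) * (ξ ^ (k + 1) - 1 - ((k + 1 : ℕ) : ℂ) * (ξ - 1))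
        = (ξ - 1) ^ 2 * ((ε (k + 1) : ℂ) * Qpoly ξ (k + 1)) := by
      intro k
      rw [key_ident ξ (k + 1)]
      ring
    rw [tsum_congr hterm, tsum_mul_left, mul_div_cancel_left₀ _ hne]
  rw [hquot]
  -- final norm bound
  apply tsum_of_norm_bounded hbsum
  intro k
  rw [norm_mul, Complex.norm_real, Real.norm_eq_abs, hb]
  apply mul_le_mul (hεb k) (Qpoly_norm_le ξ R (le_of_lt hR0) hξ (k + 1))
    (norm_nonneg _) (by positivity)
end

section
/- Let (g_n) be the renewal sequence g_0 = 1, g_n = Σ_{k=1}^n f_k g_{n-k}, where f_k ≥ 0, Σ f_k = 1, and the mean m = Σ k f_k is finite with f_1 > 0. Then lim_{n→∞} g_n = 1/m. -/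
open Filter Finset Topology

namespace RenewalAux

/-- tail sum: `rr f K = ∑_{k > K} f k`. -/
noncomputable def rr (f : ℕ → ℝ) (K : ℕ) : ℝ := ∑' i : ℕ, f (i + K + 1)

variable {f : ℕ → ℝ}

lemma Fsummable (hf0 : ∀ k : ℕ, 0 ≤ f (k + 1))
    (hmean : Summable (fun k : ℕ => ((k + 1 : ℕ) : ℝ) * f (k + 1))) :
    Summable (fun k : ℕ => f (k + 1)) := by
  refine hmean.of_nonneg_of_le hf0 (fun k => le_mul_of_one_le_left (hf0 k) ?_)
  exact_mod_cast Nat.succ_le_succ (Nat.zero_le k)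

lemma Fshift_summable (hF : Summable (fun k : ℕ => f (k + 1))) (K : ℕ) :
    Summable (fun i : ℕ => f (i + K + 1)) :=
  ((summable_nat_add_iff K).2 hF :)

lemma rr_nonneg (hf0 : ∀ k : ℕ, 0 ≤ f (k + 1)) (K : ℕ) : 0 ≤ rr f K :=
  tsum_nonneg (fun i => hf0 (i + K))

lemma sum_range_add_rr (hF : Summable (fun k : ℕ => f (k + 1)))
    (hfsum : ∑' k : ℕ, f (k + 1) = 1) (K : ℕ) :
    (∑ i ∈ range K, f (i + 1)) + rr f K = 1 := by
  have := Summable.sum_add_tsum_nat_add (f := fun k => f (k + 1)) K hF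
  simpa [rr, hfsum] using this

lemma rr_eq (hF : Summable (fun k : ℕ => f (k + 1)))
    (hfsum : ∑' k : ℕ, f (k + 1) = 1) (K : ℕ) :
    rr f K = 1 - ∑ i ∈ range K, f (i + 1) := by
  have := sum_range_add_rr hF hfsum K; linarith

lemma rr_zero (hF : Summable (fun k : ℕ => f (k + 1)))
    (hfsum : ∑' k : ℕ, f (k + 1) = 1) : rr f 0 = 1 := by
  simpa using rr_eq hF hfsum 0

lemma rr_succ (hF : Summable (fun k : ℕ => f (k + 1)))
    (hfsum : ∑' k : ℕ, f (k + 1) = 1) (K : ℕ) :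
    rr f (K + 1) = rr f K - f (K + 1) := by
  rw [rr_eq hF hfsum, rr_eq hF hfsum, Finset.sum_range_succ]; ring

lemma rr_tendsto (hF : Summable (fun k : ℕ => f (k + 1)))
    (hfsum : ∑' k : ℕ, f (k + 1) = 1) :
    Tendsto (rr f) atTop (𝓝 0) := by
  have h := tendsto_sum_nat_add (f := fun k => f (k + 1))
  have : rr f = fun K => ∑' i, f (i + K + 1) := rfl
  exact h

lemma sum_Icc_one (h : ℕ → ℝ) (n : ℕ) :
    ∑ k ∈ Icc 1 n, h k = ∑ i ∈ range n, h (i + 1) := by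
  rw [← Finset.Ico_add_one_right_eq_Icc, Finset.sum_Ico_eq_sum_range]
  simp only [Nat.add_sub_cancel]
  exact Finset.sum_congr rfl fun i _ => by rw [Nat.add_comm]

section
variable {g : ℕ → ℝ}
  (hf0 : ∀ k : ℕ, 0 ≤ f (k + 1))
  (hF : Summable (fun k : ℕ => f (k + 1)))
  (hfsum : ∑' k : ℕ, f (k + 1) = 1)
  (hg0 : g 0 = 1)
  (hg : ∀ n : ℕ, 1 ≤ n → g n = ∑ k ∈ Finset.Icc 1 n, f k * g (n - k))

include hf0 in
lemma hf0' : ∀ k : ℕ, 1 ≤ k → 0 ≤ f k := by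
  intro k hk
  obtain ⟨j, rfl⟩ := Nat.exists_eq_add_of_le hk
  simpa [Nat.add_comm] using hf0 j

include hf0 hF hfsum hg0 hg in
lemma g_nonneg : ∀ n, 0 ≤ g n := by
  intro n
  induction n using Nat.strong_induction_on with
  | _ n ih =>
    match n with
    | 0 => rw [hg0]; norm_num
    | (m+1) =>
      rw [hg (m+1) (by omega)]
      refine Finset.sum_nonneg fun k hk => ?_
      rw [Finset.mem_Icc] at hk
      exact mul_nonneg (hf0' hf0 k hk.1) (ih _ (by omega))

include hf0 hF hfsum hg0 hg in
lemma g_le_one : ∀ n, g n ≤ 1 := by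
  intro n
  induction n using Nat.strong_induction_on with
  | _ n ih =>
    match n with
    | 0 => rw [hg0]
    | (m+1) =>
      rw [hg (m+1) (by omega)]
      calc ∑ k ∈ Icc 1 (m+1), f k * g (m+1-k)
          ≤ ∑ k ∈ Icc 1 (m+1), f k := by
            refine Finset.sum_le_sum fun k hk => ?_
            rw [Finset.mem_Icc] at hk
            have h1 := hf0' hf0 k hk.1
            have h2 := ih (m+1-k) (by omega)
            have h3 := g_nonneg hf0 hF hfsum hg0 hg (m+1-k)
            nlinarith
        _ = 1 - rr f (m+1) := by
            rw [sum_Icc_one, rr_eq hF hfsum]; ring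
        _ ≤ 1 := by have := rr_nonneg hf0 (m+1); linarith

omit hf0 hF hfsum hg0 in
include hg in
lemma g_rec' (n : ℕ) : g (n+1) = ∑ k ∈ range (n+1), f (k+1) * g (n - k) := by
  rw [hg (n+1) (by omega), sum_Icc_one (fun k => f k * g (n+1-k))]
  exact Finset.sum_congr rfl fun i _ => by congr 2; omega

include hf0 hF hfsum hg0 hg in
lemma renewal_identity : ∀ n, ∑ k ∈ range (n+1), rr f k * g (n - k) = 1 := by
  intro n
  induction n with
  | zero => simp [rr_zero hF hfsum, hg0]
  | succ n ih =>
    rw [Finset.sum_range_succ' (fun k => rr f k * g (n + 1 - k)) (n+1)]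
    have e1 : ∀ k ∈ range (n+1),
        rr f (k+1) * g (n + 1 - (k+1)) =
          rr f k * g (n - k) - f (k+1) * g (n - k) := by
      intro k _
      rw [rr_succ hF hfsum]
      have : n + 1 - (k+1) = n - k := by omega
      rw [this]; ring
    rw [Finset.sum_congr rfl e1, Finset.sum_sub_distrib,
      ← g_rec' hg n, ih, rr_zero hF hfsum]
    simp

end

section
variable (hf0 : ∀ k : ℕ, 0 ≤ f (k + 1))
  (hfsum : ∑' k : ℕ, f (k + 1) = 1)
  (hmean : Summable (fun k : ℕ => ((k + 1 : ℕ) : ℝ) * f (k + 1)))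

include hf0 hmean hfsum in
lemma rr_partial (n : ℕ) :
    ∑ k ∈ range n, rr f k = n * rr f n + ∑ i ∈ range n, ((i + 1 : ℕ) : ℝ) * f (i + 1) := by
  have hF := Fsummable hf0 hmean
  induction n with
  | zero => simp
  | succ n ih =>
    rw [Finset.sum_range_succ, ih, Finset.sum_range_succ, rr_succ hF hfsum]
    push_cast
    ring

include hf0 hmean in
lemma n_rr_le (n : ℕ) :
    (n : ℝ) * rr f n ≤ ∑' i : ℕ, ((i + n + 1 : ℕ) : ℝ) * f (i + n + 1) := by
  have hF := Fsummable hf0 hmean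
  have hs1 : Summable (fun i : ℕ => (n : ℝ) * f (i + n + 1)) :=
    (Fshift_summable hF n).mul_left _
  have hs2 : Summable (fun i : ℕ => ((i + n + 1 : ℕ) : ℝ) * f (i + n + 1)) :=
    ((summable_nat_add_iff n).2 hmean :)
  rw [rr, ← tsum_mul_left]
  refine Summable.tsum_le_tsum (fun i => ?_) hs1 hs2
  have : (n : ℝ) ≤ ((i + n + 1 : ℕ) : ℝ) := by exact_mod_cast by omega
  exact mul_le_mul_of_nonneg_right this (hf0 (i + n))

include hf0 hmean hfsum in
lemma rr_hasSum : HasSum (rr f) (∑' k : ℕ, ((k + 1 : ℕ) : ℝ) * f (k + 1)) := by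
  have hF := Fsummable hf0 hmean
  rw [hasSum_iff_tendsto_nat_of_nonneg (rr_nonneg hf0)]
  have hpart : ∀ n : ℕ, ∑ k ∈ range n, rr f k
      = n * rr f n + ∑ i ∈ range n, ((i + 1 : ℕ) : ℝ) * f (i + 1) := rr_partial hf0 hfsum hmean
  have h1 : Tendsto (fun n : ℕ => ∑ i ∈ range n, ((i + 1 : ℕ) : ℝ) * f (i + 1)) atTop
      (𝓝 (∑' k : ℕ, ((k + 1 : ℕ) : ℝ) * f (k + 1))) := hmean.hasSum.tendsto_sum_nat
  have h2 : Tendsto (fun n : ℕ => (n : ℝ) * rr f n) atTop (𝓝 0) := by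
    have htail : Tendsto (fun n : ℕ => ∑' i : ℕ, ((i + n + 1 : ℕ) : ℝ) * f (i + n + 1)) atTop
        (𝓝 0) := by
      have := tendsto_sum_nat_add (f := fun k : ℕ => ((k + 1 : ℕ) : ℝ) * f (k + 1))
      exact this
    refine squeeze_zero (fun n => mul_nonneg (Nat.cast_nonneg n) (rr_nonneg hf0 n))
      (fun n => n_rr_le hf0 hmean n) htail
  have := h2.add h1
  rw [zero_add] at this
  exact this.congr fun n => (hpart n).symm

include hf0 hmean hfsum in
lemma one_le_m : 1 ≤ ∑' k : ℕ, ((k + 1 : ℕ) : ℝ) * f (k + 1) := by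
  have hF := Fsummable hf0 hmean
  rw [← hfsum]
  refine Summable.tsum_le_tsum (fun k => ?_) hF hmean
  exact le_mul_of_one_le_left (hf0 k) (by exact_mod_cast Nat.succ_le_succ (Nat.zero_le k))

end

lemma Icc_split (n K : ℕ) (h1 : 1 ≤ K) (h2 : K ≤ n) (h : ℕ → ℝ) :
    ∑ k ∈ Icc 1 n, h k = h 1 + ∑ k ∈ Ioc 1 K, h k + ∑ k ∈ Ioc K n, h k := by
  rw [Finset.Icc_eq_cons_Ioc (by omega : 1 ≤ n), Finset.sum_cons,
    ← Finset.sum_Ioc_consecutive h h1 h2]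
  ring

section
variable {g : ℕ → ℝ}
  (hf0 : ∀ k : ℕ, 0 ≤ f (k + 1))
  (hfsum : ∑' k : ℕ, f (k + 1) = 1)
  (hmean : Summable (fun k : ℕ => ((k + 1 : ℕ) : ℝ) * f (k + 1)))
  (hf1 : 0 < f 1)
  (hg0 : g 0 = 1)
  (hg : ∀ n : ℕ, 1 ≤ n → g n = ∑ k ∈ Finset.Icc 1 n, f k * g (n - k))

include hf0 hmean hfsum in
lemma sum_Icc_f (j : ℕ) : ∑ k ∈ Icc 1 j, f k = 1 - rr f j := by
  have hF := Fsummable hf0 hmean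
  rw [sum_Icc_one, rr_eq hF hfsum]; ring

include hf0 hmean hfsum in
lemma sum_Ioc_f {K n : ℕ} (h2 : K ≤ n) : ∑ k ∈ Ioc K n, f k = rr f K - rr f n := by
  have hIcc : ∀ j, Icc 1 j = Ioc 0 j := fun j => by rw [← Finset.Icc_add_one_left_eq_Ioc]; rfl
  have := Finset.sum_Ioc_consecutive f (Nat.zero_le K) h2
  rw [← hIcc, ← hIcc, sum_Icc_f hf0 hfsum hmean, sum_Icc_f hf0 hfsum hmean] at this
  linarith

include hf0 hmean hfsum in
lemma sum_Ioc_one_f {K : ℕ} (h1 : 1 ≤ K) : ∑ k ∈ Ioc 1 K, f k = 1 - rr f K - f 1 := by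
  have := sum_Icc_f hf0 hfsum hmean K
  rw [Finset.Icc_eq_cons_Ioc h1, Finset.sum_cons] at this
  linarith

include hf0 hfsum hmean hf1 hg0 hg in
lemma keyA {c : ℝ} (hc0 : 0 ≤ c)
    (hub : ∀ ε : ℝ, 0 < ε → ∀ᶠ n in atTop, g n ≤ c + ε)
    {φ : ℕ → ℕ} (hφ : Tendsto φ atTop atTop)
    (hcv : Tendsto (fun i => g (φ i)) atTop (𝓝 c)) :
    Tendsto (fun i => g (φ i - 1)) atTop (𝓝 c) := by
  have hF := Fsummable hf0 hmean
  have hgnn := g_nonneg hf0 hF hfsum hg0 hg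
  have hgle := g_le_one hf0 hF hfsum hg0 hg
  have hf1le : f 1 ≤ 1 := by
    have h1 := sum_Icc_f hf0 hfsum hmean 1
    have h2 := rr_nonneg hf0 1
    simp only [Finset.Icc_self, Finset.sum_singleton] at h1
    linarith
  rw [Metric.tendsto_atTop]
  intro ε hε
  set δ := min (ε/2) (f 1 * ε / 8) with hδdef
  have hδpos : 0 < δ := lt_min (by linarith) (by positivity)
  have hδε : δ ≤ ε/2 := min_le_left _ _
  have hδf : 3 * δ ≤ f 1 * (ε/2) := by
    have h := min_le_right (ε/2) (f 1 * ε / 8)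
    nlinarith
  obtain ⟨K, hK1, hKr⟩ : ∃ K, 1 ≤ K ∧ rr f K ≤ δ := by
    have h1 := (rr_tendsto hF hfsum).eventually_le_const hδpos
    exact ((eventually_ge_atTop 1).and h1).exists
  obtain ⟨N₁, hN₁⟩ := eventually_atTop.1 (hub δ hδpos)
  have hev1 : ∀ᶠ i in atTop, N₁ + K + 1 ≤ φ i := hφ.eventually_ge_atTop _
  have hev2 : ∀ᶠ i in atTop, c - δ ≤ g (φ i) :=
    hcv.eventually (eventually_ge_nhds (by linarith : c - δ < c))
  obtain ⟨N, hN⟩ := eventually_atTop.1 (hev1.and hev2)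
  refine ⟨N, fun i hi => ?_⟩
  obtain ⟨hn1, hn2⟩ := hN i hi
  set n := φ i with hndef
  have hnK : K ≤ n := by omega
  have hsplit : g n = f 1 * g (n - 1) + ∑ k ∈ Ioc 1 K, f k * g (n - k)
      + ∑ k ∈ Ioc K n, f k * g (n - k) := by
    rw [hg n (by omega), Icc_split n K hK1 hnK]
  have R := rr f K
  have hRnn : 0 ≤ rr f K := rr_nonneg hf0 K
  have bound1 : ∑ k ∈ Ioc 1 K, f k * g (n - k) ≤ (1 - rr f K - f 1) * (c + δ) := by
    calc ∑ k ∈ Ioc 1 K, f k * g (n - k) ≤ ∑ k ∈ Ioc 1 K, f k * (c + δ) := by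
          refine Finset.sum_le_sum fun k hk => ?_
          rw [Finset.mem_Ioc] at hk
          refine mul_le_mul_of_nonneg_left ?_ (hf0' hf0 k (by omega))
          exact hN₁ (n - k) (by omega)
      _ = (1 - rr f K - f 1) * (c + δ) := by
          rw [← Finset.sum_mul, sum_Ioc_one_f hf0 hfsum hmean hK1]
  have bound2 : ∑ k ∈ Ioc K n, f k * g (n - k) ≤ rr f K := by
    calc ∑ k ∈ Ioc K n, f k * g (n - k) ≤ ∑ k ∈ Ioc K n, f k := by
          refine Finset.sum_le_sum fun k hk => ?_
          rw [Finset.mem_Ioc] at hk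
          have := hf0' hf0 k (by omega)
          have := hgle (n - k)
          nlinarith
      _ = rr f K - rr f n := sum_Ioc_f hf0 hfsum hmean hnK
      _ ≤ rr f K := by have := rr_nonneg hf0 n; linarith
  have hlow : f 1 * g (n - 1) ≥ (c - δ) - (1 - rr f K - f 1) * (c + δ) - rr f K := by
    linarith [hsplit, bound1, bound2, hn2]
  have halg : (c - δ) - (1 - rr f K - f 1) * (c + δ) - rr f K
      = f 1 * c + f 1 * δ - 2*δ - rr f K + rr f K * (c + δ) := by ring
  have hRc : 0 ≤ rr f K * (c + δ) := mul_nonneg hRnn (by linarith)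
  have hkey : f 1 * g (n - 1) ≥ f 1 * c - 3 * δ := by
    have hf1δ : 0 ≤ f 1 * δ := by positivity
    rw [halg] at hlow
    linarith
  have hglow : c - ε/2 ≤ g (n - 1) := by
    have h1 : f 1 * (c - ε/2) ≤ f 1 * g (n - 1) := by nlinarith
    exact le_of_mul_le_mul_left h1 hf1
  have hgup : g (n - 1) ≤ c + δ := hN₁ (n - 1) (by omega)
  rw [Real.dist_eq, abs_sub_lt_iff]
  constructor <;> linarith

include hf0 hfsum hmean hf1 hg0 hg in
lemma keyB {c : ℝ} (hc0 : 0 ≤ c) (hc1 : c ≤ 1)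
    (hlb : ∀ ε : ℝ, 0 < ε → ∀ᶠ n in atTop, c - ε ≤ g n)
    {φ : ℕ → ℕ} (hφ : Tendsto φ atTop atTop)
    (hcv : Tendsto (fun i => g (φ i)) atTop (𝓝 c)) :
    Tendsto (fun i => g (φ i - 1)) atTop (𝓝 c) := by
  have hF := Fsummable hf0 hmean
  have hgnn := g_nonneg hf0 hF hfsum hg0 hg
  have hgle := g_le_one hf0 hF hfsum hg0 hg
  rw [Metric.tendsto_atTop]
  intro ε hε
  set δ := min (ε/2) (f 1 * ε / 8) with hδdef
  have hδpos : 0 < δ := lt_min (by linarith) (by positivity)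
  have hδε : δ ≤ ε/2 := min_le_left _ _
  have hδf : 3 * δ ≤ f 1 * (ε/2) := by
    have h := min_le_right (ε/2) (f 1 * ε / 8)
    nlinarith
  obtain ⟨K, hK1, hKr⟩ : ∃ K, 1 ≤ K ∧ rr f K ≤ δ := by
    have h1 := (rr_tendsto hF hfsum).eventually_le_const hδpos
    exact ((eventually_ge_atTop 1).and h1).exists
  obtain ⟨N₁, hN₁⟩ := eventually_atTop.1 (hlb δ hδpos)
  have hev1 : ∀ᶠ i in atTop, N₁ + K + 1 ≤ φ i := hφ.eventually_ge_atTop _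
  have hev2 : ∀ᶠ i in atTop, g (φ i) ≤ c + δ :=
    hcv.eventually (eventually_le_nhds (by linarith : c < c + δ))
  obtain ⟨N, hN⟩ := eventually_atTop.1 (hev1.and hev2)
  refine ⟨N, fun i hi => ?_⟩
  obtain ⟨hn1, hn2⟩ := hN i hi
  set n := φ i with hndef
  have hnK : K ≤ n := by omega
  have hsplit : g n = f 1 * g (n - 1) + ∑ k ∈ Ioc 1 K, f k * g (n - k)
      + ∑ k ∈ Ioc K n, f k * g (n - k) := by
    rw [hg n (by omega), Icc_split n K hK1 hnK]
  have hRnn : 0 ≤ rr f K := rr_nonneg hf0 K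
  have bound1 : (1 - rr f K - f 1) * (c - δ) ≤ ∑ k ∈ Ioc 1 K, f k * g (n - k) := by
    calc (1 - rr f K - f 1) * (c - δ) = ∑ k ∈ Ioc 1 K, f k * (c - δ) := by
          rw [← Finset.sum_mul, sum_Ioc_one_f hf0 hfsum hmean hK1]
      _ ≤ ∑ k ∈ Ioc 1 K, f k * g (n - k) := by
          refine Finset.sum_le_sum fun k hk => ?_
          rw [Finset.mem_Ioc] at hk
          refine mul_le_mul_of_nonneg_left ?_ (hf0' hf0 k (by omega))
          exact hN₁ (n - k) (by omega)
  have bound2 : 0 ≤ ∑ k ∈ Ioc K n, f k * g (n - k) := by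
    refine Finset.sum_nonneg fun k hk => ?_
    rw [Finset.mem_Ioc] at hk
    exact mul_nonneg (hf0' hf0 k (by omega)) (hgnn (n - k))
  have hup : f 1 * g (n - 1) ≤ (c + δ) - (1 - rr f K - f 1) * (c - δ) := by
    linarith [hsplit, bound1, bound2, hn2]
  have hkey : f 1 * g (n - 1) ≤ f 1 * c + 3 * δ := by
    have h1 : rr f K * (c - δ) ≤ δ := by nlinarith
    nlinarith
  have hgup : g (n - 1) ≤ c + ε/2 := by
    have h1 : f 1 * g (n - 1) ≤ f 1 * (c + ε/2) := by nlinarith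
    exact le_of_mul_le_mul_left h1 hf1
  have hglow : c - δ ≤ g (n - 1) := hN₁ (n - 1) (by omega)
  rw [Real.dist_eq, abs_sub_lt_iff]
  constructor <;> linarith

lemma sub_tendsto {φ : ℕ → ℕ} (hφ : Tendsto φ atTop atTop) (k : ℕ) :
    Tendsto (fun i => φ i - k) atTop atTop := by
  rw [tendsto_atTop]
  intro b
  filter_upwards [hφ.eventually_ge_atTop (b + k)] with i hi
  omega

include hf0 hfsum hmean hf1 hg0 hg in
lemma keyA_iter {c : ℝ} (hc0 : 0 ≤ c)
    (hub : ∀ ε : ℝ, 0 < ε → ∀ᶠ n in atTop, g n ≤ c + ε)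
    {φ : ℕ → ℕ} (hφ : Tendsto φ atTop atTop)
    (hcv : Tendsto (fun i => g (φ i)) atTop (𝓝 c)) :
    ∀ k : ℕ, Tendsto (fun i => g (φ i - k)) atTop (𝓝 c) := by
  intro k
  induction k with
  | zero => simpa using hcv
  | succ k ih =>
    have h := keyA hf0 hfsum hmean hf1 hg0 hg hc0 hub (sub_tendsto hφ k) ih
    simpa [Nat.sub_sub] using h

include hf0 hfsum hmean hf1 hg0 hg in
lemma keyB_iter {c : ℝ} (hc0 : 0 ≤ c) (hc1 : c ≤ 1)
    (hlb : ∀ ε : ℝ, 0 < ε → ∀ᶠ n in atTop, c - ε ≤ g n)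
    {φ : ℕ → ℕ} (hφ : Tendsto φ atTop atTop)
    (hcv : Tendsto (fun i => g (φ i)) atTop (𝓝 c)) :
    ∀ k : ℕ, Tendsto (fun i => g (φ i - k)) atTop (𝓝 c) := by
  intro k
  induction k with
  | zero => simpa using hcv
  | succ k ih =>
    have h := keyB hf0 hfsum hmean hf1 hg0 hg hc0 hc1 hlb (sub_tendsto hφ k) ih
    simpa [Nat.sub_sub] using h

end

end RenewalAux

open RenewalAux Filter Finset Topology in
theorem renewal_theorem
    (f g : ℕ → ℝ) (m : ℝ)
    (hf0 : ∀ k : ℕ, 0 ≤ f (k + 1))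
    (hfsum : ∑' k : ℕ, f (k + 1) = 1)
    (hmean : Summable (fun k : ℕ => ((k + 1 : ℕ) : ℝ) * f (k + 1)))
    (hm : m = ∑' k : ℕ, ((k + 1 : ℕ) : ℝ) * f (k + 1))
    (hf1 : 0 < f 1)
    (hg0 : g 0 = 1)
    (hg : ∀ n : ℕ, 1 ≤ n → g n = ∑ k ∈ Finset.Icc 1 n, f k * g (n - k)) :
    Filter.Tendsto g Filter.atTop (nhds (1 / m)) := by
  have hF := Fsummable hf0 hmean
  have hgnn := g_nonneg hf0 hF hfsum hg0 hg
  have hgle := g_le_one hf0 hF hfsum hg0 hg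
  have hm1 : 1 ≤ m := hm ▸ one_le_m hf0 hfsum hmean
  have hm0 : 0 < m := by linarith
  have hrrS : HasSum (rr f) m := hm ▸ rr_hasSum hf0 hfsum hmean
  set L := limsup g atTop with hLdef
  set l := liminf g atTop with hldef
  have hbdd_above : IsBoundedUnder (· ≤ ·) atTop g := isBoundedUnder_of ⟨1, hgle⟩
  have hbdd_below : IsBoundedUnder (· ≥ ·) atTop g := isBoundedUnder_of ⟨0, hgnn⟩
  have hcob_le : IsCoboundedUnder (· ≤ ·) atTop g := hbdd_below.isCobounded_le
  have hcob_ge : IsCoboundedUnder (· ≥ ·) atTop g := hbdd_above.isCobounded_ge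
  have hl0 : 0 ≤ l := le_liminf_of_le hcob_ge (Eventually.of_forall hgnn)
  have hL1 : L ≤ 1 := limsup_le_of_le hcob_le (Eventually.of_forall hgle)
  have hlL : l ≤ L := liminf_le_limsup hbdd_above hbdd_below
  have hL0 : 0 ≤ L := le_trans hl0 hlL
  have hl1 : l ≤ 1 := le_trans hlL hL1
  have hub : ∀ ε : ℝ, 0 < ε → ∀ᶠ n in atTop, g n ≤ L + ε := fun ε hε =>
    (eventually_lt_of_limsup_lt (by linarith) hbdd_above).mono fun n h => le_of_lt h
  have hlb : ∀ ε : ℝ, 0 < ε → ∀ᶠ n in atTop, l - ε ≤ g n := fun ε hε =>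
    (eventually_lt_of_lt_liminf (by linarith) hbdd_below).mono fun n h => le_of_lt h
  -- subsequence converging to the limsup
  have hclusterL : MapClusterPt L atTop g := by
    rw [mapClusterPt_iff_frequently]
    intro s hs
    obtain ⟨ε, hε, hball⟩ := Metric.mem_nhds_iff.1 hs
    have h1 : ∃ᶠ n in atTop, L - ε < g n :=
      frequently_lt_of_lt_limsup hcob_le (by linarith)
    have h2 : ∀ᶠ n in atTop, g n < L + ε :=
      eventually_lt_of_limsup_lt (by linarith) hbdd_above
    refine (h1.and_eventually h2).mono fun n hn => hball ?_
    rw [Metric.mem_ball, Real.dist_eq, abs_sub_lt_iff]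
    constructor <;> linarith [hn.1, hn.2]
  obtain ⟨ψ, hψmono, hψ⟩ := TopologicalSpace.FirstCountableTopology.tendsto_subseq hclusterL
  have hψt : Tendsto ψ atTop atTop := hψmono.tendsto_atTop
  have hiterL := keyA_iter hf0 hfsum hmean hf1 hg0 hg hL0 hub hψt hψ
  -- subsequence converging to the liminf
  have hclusterl : MapClusterPt l atTop g := by
    rw [mapClusterPt_iff_frequently]
    intro s hs
    obtain ⟨ε, hε, hball⟩ := Metric.mem_nhds_iff.1 hs
    have h1 : ∃ᶠ n in atTop, g n < l + ε :=
      frequently_lt_of_liminf_lt hcob_ge (by linarith)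
    have h2 : ∀ᶠ n in atTop, l - ε < g n :=
      eventually_lt_of_lt_liminf (by linarith) hbdd_below
    refine (h1.and_eventually h2).mono fun n hn => hball ?_
    rw [Metric.mem_ball, Real.dist_eq, abs_sub_lt_iff]
    constructor <;> linarith [hn.1, hn.2]
  obtain ⟨ψ', hψ'mono, hψ'⟩ := TopologicalSpace.FirstCountableTopology.tendsto_subseq hclusterl
  have hψ't : Tendsto ψ' atTop atTop := hψ'mono.tendsto_atTop
  have hiterl := keyB_iter hf0 hfsum hmean hf1 hg0 hg hl0 hl1 hlb hψ't hψ'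
  -- upper bound: L ≤ 1/m
  have hLle : ∀ K : ℕ, (∑ k ∈ range (K+1), rr f k) * L ≤ 1 := by
    intro K
    have hsum_t : Tendsto (fun i => ∑ k ∈ range (K+1), rr f k * g (ψ i - k)) atTop
        (𝓝 (∑ k ∈ range (K+1), rr f k * L)) :=
      tendsto_finset_sum _ (fun k _ => tendsto_const_nhds.mul (hiterL k))
    have hle : ∀ᶠ i in atTop, ∑ k ∈ range (K+1), rr f k * g (ψ i - k) ≤ 1 := by
      filter_upwards [hψt.eventually_ge_atTop K] with i hK
      calc ∑ k ∈ range (K+1), rr f k * g (ψ i - k)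
          ≤ ∑ k ∈ range (ψ i + 1), rr f k * g (ψ i - k) := by
            refine Finset.sum_le_sum_of_subset_of_nonneg
              (Finset.range_subset_range.2 (by omega)) fun k _ _ => ?_
            exact mul_nonneg (rr_nonneg hf0 k) (hgnn _)
        _ = 1 := renewal_identity hf0 hF hfsum hg0 hg (ψ i)
    have := le_of_tendsto hsum_t hle
    rwa [← Finset.sum_mul] at this
  have hmL : m * L ≤ 1 := by
    have hten : Tendsto (fun K : ℕ => (∑ k ∈ range (K+1), rr f k) * L) atTop (𝓝 (m * L)) := by
      have h1 : Tendsto (fun n : ℕ => ∑ k ∈ range n, rr f k) atTop (𝓝 m) :=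
        hrrS.tendsto_sum_nat
      exact (h1.comp (tendsto_add_atTop_nat 1)).mul_const L
    exact le_of_tendsto hten (Eventually.of_forall hLle)
  -- lower bound: 1/m ≤ l
  have hlge : ∀ K : ℕ, 1 ≤ (∑ k ∈ range (K+1), rr f k) * l + (m - ∑ k ∈ range (K+1), rr f k) := by
    intro K
    have hsum_t : Tendsto
        (fun i => (∑ k ∈ range (K+1), rr f k * g (ψ' i - k)) + (m - ∑ k ∈ range (K+1), rr f k))
        atTop (𝓝 ((∑ k ∈ range (K+1), rr f k * l) + (m - ∑ k ∈ range (K+1), rr f k))) :=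
      (tendsto_finset_sum _ (fun k _ => tendsto_const_nhds.mul (hiterl k))).add
        tendsto_const_nhds
    have hle : ∀ᶠ i in atTop,
        1 ≤ (∑ k ∈ range (K+1), rr f k * g (ψ' i - k)) + (m - ∑ k ∈ range (K+1), rr f k) := by
      filter_upwards [hψ't.eventually_ge_atTop K] with i hK
      have hsub : range (K+1) ⊆ range (ψ' i + 1) := Finset.range_subset_range.2 (by omega)
      have hid := renewal_identity hf0 hF hfsum hg0 hg (ψ' i)
      have hsplit := Finset.sum_sdiff (f := fun k => rr f k * g (ψ' i - k)) hsub
      have hrest : ∑ k ∈ range (ψ' i + 1) \ range (K+1), rr f k * g (ψ' i - k)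
          ≤ m - ∑ k ∈ range (K+1), rr f k := by
        have h1 : ∑ k ∈ range (ψ' i + 1) \ range (K+1), rr f k * g (ψ' i - k)
            ≤ ∑ k ∈ range (ψ' i + 1) \ range (K+1), rr f k := by
          refine Finset.sum_le_sum fun k _ => ?_
          have := rr_nonneg hf0 k
          have := hgle (ψ' i - k)
          nlinarith
        have h2 : ∑ k ∈ range (ψ' i + 1), rr f k ≤ m := by
          rw [← hrrS.tsum_eq]
          exact Summable.sum_le_tsum _ (fun k _ => rr_nonneg hf0 k) hrrS.summable
        have h3 := Finset.sum_sdiff (f := rr f) hsub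
        linarith
      linarith [hid, hsplit]
    have := ge_of_tendsto hsum_t hle
    rwa [← Finset.sum_mul] at this
  have hml : 1 ≤ m * l := by
    have hten : Tendsto
        (fun K : ℕ => (∑ k ∈ range (K+1), rr f k) * l + (m - ∑ k ∈ range (K+1), rr f k))
        atTop (𝓝 (m * l + (m - m))) := by
      have h1 : Tendsto (fun n : ℕ => ∑ k ∈ range n, rr f k) atTop (𝓝 m) :=
        hrrS.tendsto_sum_nat
      have h2 := h1.comp (tendsto_add_atTop_nat 1)
      exact (h2.mul_const l).add (tendsto_const_nhds.sub h2)
    rw [show m * l + (m - m) = m * l by ring] at hten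
    exact ge_of_tendsto hten (Eventually.of_forall hlge)
  have hfin1 : L ≤ 1 / m := by rw [le_div_iff₀ hm0]; nlinarith
  have hfin2 : 1 / m ≤ l := by rw [div_le_iff₀ hm0]; nlinarith
  exact tendsto_of_le_liminf_of_limsup_le hfin2 hfin1 hbdd_above hbdd_below
end
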